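/- Let Y = ΨD + W where D is block P-sparse with support Ω_T, and let Ω̂ be any block-index set with |Ω̂| ≤ P. Define the estimator D̂ by D̂_{Ω̂} = Ψ_{Ω̂}^† Y and D̂ = 0 outside Ω̂. Then ‖D − D̂‖_F ≤ ((1 − δ_P + δ_{2P})/(1 − δ_P)) ‖D_{Ω_T∖Ω̂}‖_F + (√(1+δ_P)/(1−δ_P)) ‖W‖_F, assuming Ψ satisfies the structured RIP with δ_{2P} < 1. -/

import Mathlib

open scoped BigOperators
open Matrix
noncomputable section

variable {Np M L R : ℕ}

/-- Frobenius norm of a complex matrix. -/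
def frob {m n : Type*} [Fintype m] [Fintype n] (A : Matrix m n ℂ) : ℝ :=
  Real.sqrt (∑ i, ∑ j, ‖A i j‖ ^ 2)

/-- `D` is block-supported on the block-index set `Ω`. -/
def SuppOn (Ω : Finset (Fin L)) (D : Matrix (Fin L × Fin M) (Fin R) ℂ) : Prop :=
  ∀ p r, p.1 ∉ Ω → D p r = 0

/-- Column-block submatrix `Ψ_Ω` of `Ψ`. -/
def bsub (Ψ : Matrix (Fin Np) (Fin L × Fin M) ℂ) (Ω : Finset (Fin L)) :
    Matrix (Fin Np) ({l // l ∈ Ω} × Fin M) ℂ :=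
  Ψ.submatrix id (fun q => ((q.1 : Fin L), q.2))

/-- Row-block submatrix `D_Ω` of `D`. -/
def rsub (D : Matrix (Fin L × Fin M) (Fin R) ℂ) (Ω : Finset (Fin L)) :
    Matrix ({l // l ∈ Ω} × Fin M) (Fin R) ℂ :=
  D.submatrix (fun q => ((q.1 : Fin L), q.2)) id

/-- Moore–Penrose pseudoinverse `Ψ_Ω^† = (Ψ_Ωᴴ Ψ_Ω)⁻¹ Ψ_Ωᴴ` of the column-block submatrix. -/
def bpinv (Ψ : Matrix (Fin Np) (Fin L × Fin M) ℂ) (Ω : Finset (Fin L)) :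
    Matrix ({l // l ∈ Ω} × Fin M) (Fin Np) ℂ :=
  ((bsub Ψ Ω)ᴴ * bsub Ψ Ω)⁻¹ * (bsub Ψ Ω)ᴴ

/-- Re-embed a matrix indexed by the blocks of `Ω` as a full `ML × R` matrix, zero outside `Ω`. -/
def expand (Ω : Finset (Fin L)) (X : Matrix ({l // l ∈ Ω} × Fin M) (Fin R) ℂ) :
    Matrix (Fin L × Fin M) (Fin R) ℂ :=
  fun p r => if h : p.1 ∈ Ω then X (⟨p.1, h⟩, p.2) r else 0

/-- Structured (block) RIP of order `P` with constant `δ`. -/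
def SRIP (Ψ : Matrix (Fin Np) (Fin L × Fin M) ℂ) (P : ℕ) (δ : ℝ) : Prop :=
  ∀ Ω : Finset (Fin L), Ω.card ≤ P →
    ∀ D : Matrix (Fin L × Fin M) (Fin R) ℂ, SuppOn Ω D →
      (1 - δ) * frob D ^ 2 ≤ frob (Ψ * D) ^ 2 ∧ frob (Ψ * D) ^ 2 ≤ (1 + δ) * frob D ^ 2

-- toE
def toE {m n : Type*} [Fintype m] [Fintype n] (A : Matrix m n ℂ) :
    EuclideanSpace ℂ (m × n) := WithLp.toLp 2 (fun p => A p.1 p.2)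

variable {m n k : Type*} [Fintype m] [Fintype n] [Fintype k]

lemma frob_eq_norm (A : Matrix m n ℂ) : frob A = ‖toE A‖ := by
  rw [EuclideanSpace.norm_eq, frob]
  congr 1
  rw [Fintype.sum_prod_type]
  rfl

lemma frob_nonneg (A : Matrix m n ℂ) : 0 ≤ frob A := Real.sqrt_nonneg _

lemma toE_add (A B : Matrix m n ℂ) : toE (A + B) = toE A + toE B := rfl
lemma toE_neg (A : Matrix m n ℂ) : toE (-A) = -toE A := rfl
lemma toE_zero : toE (0 : Matrix m n ℂ) = 0 := rfl
lemma toE_smul (c : ℂ) (A : Matrix m n ℂ) : toE (c • A) = c • toE A := rfl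

lemma frob_add_le (A B : Matrix m n ℂ) : frob (A + B) ≤ frob A + frob B := by
  simp only [frob_eq_norm, toE_add]; exact norm_add_le _ _

lemma frob_neg (A : Matrix m n ℂ) : frob (-A) = frob A := by
  simp only [frob_eq_norm, toE_neg, norm_neg]

lemma frob_eq_zero {A : Matrix m n ℂ} (h : frob A = 0) : A = 0 := by
  rw [frob_eq_norm, norm_eq_zero] at h
  ext i j
  have := congrArg (fun v => v (i, j)) h
  simpa [toE] using this

lemma frob_zero : frob (0 : Matrix m n ℂ) = 0 := by
  rw [frob_eq_norm, toE_zero, norm_zero]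

lemma frob_smul (c : ℂ) (A : Matrix m n ℂ) : frob (c • A) = ‖c‖ * frob A := by
  simp only [frob_eq_norm, toE_smul, norm_smul]

lemma frob_sq_eq_re_inner (A : Matrix m n ℂ) :
    frob A ^ 2 = RCLike.re (inner (𝕜 := ℂ) (toE A) (toE A)) := by
  rw [frob_eq_norm, inner_self_eq_norm_sq]

lemma inner_toE (X Y : Matrix m n ℂ) :
    inner (𝕜 := ℂ) (toE X) (toE Y) = ((Xᴴ * Y).trace : ℂ) := by
  simp only [PiLp.inner_apply, RCLike.inner_apply, toE, Matrix.trace, Matrix.diag,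
    Matrix.mul_apply, Matrix.conjTranspose_apply, Fintype.sum_prod_type]
  rw [Finset.sum_comm]
  exact Finset.sum_congr rfl fun _ _ => Finset.sum_congr rfl fun _ _ => mul_comm _ _

lemma adjoint_inner (B : Matrix n m ℂ) (U : Matrix m k ℂ) (V : Matrix n k ℂ) :
    (inner (𝕜 := ℂ) (toE (B * U)) (toE V)) = inner (𝕜 := ℂ) (toE U) (toE (Bᴴ * V)) := by
  rw [inner_toE, inner_toE, Matrix.conjTranspose_mul, Matrix.mul_assoc]

lemma sqrt_mul_bound {x y c : ℝ} (hx : 0 ≤ x) (hy : 0 ≤ y) (h : x ^ 2 ≤ c * y ^ 2) :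
    x ≤ Real.sqrt c * y := by
  rcases le_or_gt 0 c with hc | hc
  · have : x = Real.sqrt (x ^ 2) := (Real.sqrt_sq hx).symm
    rw [this]
    calc Real.sqrt (x ^ 2) ≤ Real.sqrt (c * y ^ 2) := Real.sqrt_le_sqrt h
      _ = Real.sqrt c * y := by
          rw [Real.sqrt_mul hc, Real.sqrt_sq hy]
  · have hx0 : x ^ 2 ≤ 0 := le_trans h (by nlinarith [sq_nonneg y])
    have : x = 0 := by nlinarith
    rw [this, Real.sqrt_eq_zero_of_nonpos hc.le]
    nlinarith

section restrict
variable {α : Type*} [AddCommMonoid α]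

lemma sum_restrict (Ω : Finset (Fin L)) (g : Fin L × Fin M → α)
    (hg : ∀ p : Fin L × Fin M, p.1 ∉ Ω → g p = 0) :
    ∑ p : Fin L × Fin M, g p = ∑ q : {l // l ∈ Ω} × Fin M, g (↑q.1, q.2) := by
  rw [Fintype.sum_prod_type, Fintype.sum_prod_type]
  have h1 : ∑ x : Fin L, ∑ y : Fin M, g (x, y) = ∑ x ∈ Ω, ∑ y : Fin M, g (x, y) :=
    (Finset.sum_subset (Finset.subset_univ Ω) fun l _ hl =>
      Finset.sum_eq_zero fun m _ => hg (l, m) hl).symm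
  rw [h1]
  exact (Finset.sum_coe_sort Ω fun l => ∑ y : Fin M, g (l, y)).symm

end restrict

lemma expand_apply_mem (Ω : Finset (Fin L)) (X : Matrix ({l // l ∈ Ω} × Fin M) (Fin R) ℂ)
    (q : {l // l ∈ Ω} × Fin M) (r : Fin R) :
    expand Ω X (↑q.1, q.2) r = X q r := by
  simp only [expand]
  rw [dif_pos q.1.2]

lemma suppOn_expand (Ω : Finset (Fin L)) (X : Matrix ({l // l ∈ Ω} × Fin M) (Fin R) ℂ) :
    SuppOn Ω (expand Ω X) := by
  intro p r hp
  simp only [expand, dif_neg hp]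

lemma frob_expand (Ω : Finset (Fin L)) (X : Matrix ({l // l ∈ Ω} × Fin M) (Fin R) ℂ) :
    frob (expand Ω X) = frob X := by
  unfold frob
  congr 1
  have := sum_restrict (M := M) Ω (fun p => ∑ r, ‖expand Ω X p r‖ ^ 2) ?_
  · rw [this]
    exact Finset.sum_congr rfl fun q _ => Finset.sum_congr rfl fun r _ => by
      rw [expand_apply_mem]
  · intro p hp
    exact Finset.sum_eq_zero fun r _ => by
      show ‖expand Ω X p r‖ ^ 2 = 0
      rw [suppOn_expand Ω X p r hp]; simp

lemma mul_expand (Ψ : Matrix (Fin Np) (Fin L × Fin M) ℂ) (Ω : Finset (Fin L))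
    (X : Matrix ({l // l ∈ Ω} × Fin M) (Fin R) ℂ) :
    Ψ * expand Ω X = bsub Ψ Ω * X := by
  ext i r
  rw [Matrix.mul_apply, Matrix.mul_apply]
  have := sum_restrict (M := M) Ω (fun p => Ψ i p * expand Ω X p r) ?_
  · rw [this]
    exact Finset.sum_congr rfl fun q _ => by rw [expand_apply_mem]; rfl
  · intro p hp
    show Ψ i p * expand Ω X p r = 0
    rw [suppOn_expand Ω X p r hp, mul_zero]

lemma toE_sub (A B : Matrix m n ℂ) : toE (A - B) = toE A - toE B := rfl

lemma re_to_c (z : ℂ) : RCLike.re z = z.re := rfl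

lemma frob_add_sq (A B : Matrix m n ℂ) :
    frob (A + B) ^ 2 = frob A ^ 2 + 2 * (inner (𝕜 := ℂ) (toE A) (toE B)).re + frob B ^ 2 := by
  simp only [frob_eq_norm, toE_add]
  rw [norm_add_sq (𝕜 := ℂ)]
  rfl

lemma frob_sub_sq (A B : Matrix m n ℂ) :
    frob (A - B) ^ 2 = frob A ^ 2 - 2 * (inner (𝕜 := ℂ) (toE A) (toE B)).re + frob B ^ 2 := by
  simp only [frob_eq_norm, toE_sub]
  rw [norm_sub_sq (𝕜 := ℂ)]
  rfl

lemma frob_sq (A : Matrix m n ℂ) :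
    frob A ^ 2 = (inner (𝕜 := ℂ) (toE A) (toE A)).re := by
  have h := inner_self_eq_norm_sq (𝕜 := ℂ) (E := EuclideanSpace ℂ (m × n)) (toE A)
  rw [RCLike.re_to_complex] at h
  rw [frob_eq_norm, ← h]

lemma re_inner_le' (x y : EuclideanSpace ℂ (m × n)) :
    (inner (𝕜 := ℂ) x y).re ≤ ‖x‖ * ‖y‖ := by
  have h1 : ‖(inner (𝕜 := ℂ) x y : ℂ)‖ ≤ ‖x‖ * ‖y‖ := norm_inner_le_norm (𝕜 := ℂ) x y
  have h2 : (inner (𝕜 := ℂ) x y : ℂ).re ≤ ‖(inner (𝕜 := ℂ) x y : ℂ)‖ := by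
    have := RCLike.re_le_norm (K := ℂ) (inner (𝕜 := ℂ) x y)
    rwa [RCLike.re_to_complex] at this
  exact le_trans h2 h1

lemma inner_disjoint {Ω1 Ω2 : Finset (Fin L)} (hd : Disjoint Ω1 Ω2)
    {X Y : Matrix (Fin L × Fin M) (Fin R) ℂ} (hX : SuppOn Ω1 X) (hY : SuppOn Ω2 Y) :
    inner (𝕜 := ℂ) (toE X) (toE Y) = 0 := by
  simp only [PiLp.inner_apply, RCLike.inner_apply, toE]
  refine Finset.sum_eq_zero fun p _ => ?_
  by_cases h : p.1.1 ∈ Ω1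
  · rw [hY p.1 p.2 (Finset.disjoint_left.mp hd h), zero_mul]
  · rw [hX p.1 p.2 h, map_zero, mul_zero]

lemma suppOn_add {Ω : Finset (Fin L)} {X Y : Matrix (Fin L × Fin M) (Fin R) ℂ}
    (hX : SuppOn Ω X) (hY : SuppOn Ω Y) : SuppOn Ω (X + Y) := by
  intro p r hp; simp [Matrix.add_apply, hX p r hp, hY p r hp]

lemma suppOn_sub {Ω : Finset (Fin L)} {X Y : Matrix (Fin L × Fin M) (Fin R) ℂ}
    (hX : SuppOn Ω X) (hY : SuppOn Ω Y) : SuppOn Ω (X - Y) := by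
  intro p r hp; simp [Matrix.sub_apply, hX p r hp, hY p r hp]

lemma suppOn_smul {Ω : Finset (Fin L)} {X : Matrix (Fin L × Fin M) (Fin R) ℂ} (c : ℂ)
    (hX : SuppOn Ω X) : SuppOn Ω (c • X) := by
  intro p r hp; simp [Matrix.smul_apply, hX p r hp]

lemma suppOn_mono {Ω Ω' : Finset (Fin L)} (h : Ω ⊆ Ω') {X : Matrix (Fin L × Fin M) (Fin R) ℂ}
    (hX : SuppOn Ω X) : SuppOn Ω' X := fun p r hp => hX p r (fun hc => hp (h hc))

lemma cross_bound (Ψ : Matrix (Fin Np) (Fin L × Fin M) ℂ) (P : ℕ) (δ : ℝ)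
    (hRIP : SRIP (R := R) Ψ (2 * P) δ)
    {Ω1 Ω2 : Finset (Fin L)} (h1 : Ω1.card ≤ P) (h2 : Ω2.card ≤ P) (hd : Disjoint Ω1 Ω2)
    {X Y : Matrix (Fin L × Fin M) (Fin R) ℂ} (hX : SuppOn Ω1 X) (hY : SuppOn Ω2 Y) :
    (inner (𝕜 := ℂ) (toE (Ψ * X)) (toE (Ψ * Y))).re ≤ δ * frob X * frob Y := by
  set a := frob X with ha
  set b := frob Y with hb
  have ha0 : 0 ≤ a := frob_nonneg X
  have hb0 : 0 ≤ b := frob_nonneg Y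
  rcases eq_or_lt_of_le ha0 with haz | hap
  · have : X = 0 := frob_eq_zero haz.symm
    rw [← haz]
    simp [this, toE_zero]
  rcases eq_or_lt_of_le hb0 with hbz | hbp
  · have : Y = 0 := frob_eq_zero hbz.symm
    rw [← hbz]
    simp [this, toE_zero]
  set X' : Matrix (Fin L × Fin M) (Fin R) ℂ := (b : ℂ) • X with hX'
  set Y' : Matrix (Fin L × Fin M) (Fin R) ℂ := (a : ℂ) • Y with hY'
  have hfX' : frob X' = b * a := by
    rw [hX', frob_smul, Complex.norm_real, Real.norm_eq_abs, abs_of_nonneg hb0, ← ha]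
  have hfY' : frob Y' = a * b := by
    rw [hY', frob_smul, Complex.norm_real, Real.norm_eq_abs, abs_of_nonneg ha0, ← hb]
  have hXs : SuppOn Ω1 X' := suppOn_smul _ hX
  have hYs : SuppOn Ω2 Y' := suppOn_smul _ hY
  have hcard : (Ω1 ∪ Ω2).card ≤ 2 * P := by
    calc (Ω1 ∪ Ω2).card ≤ Ω1.card + Ω2.card := Finset.card_union_le _ _
      _ ≤ 2 * P := by omega
  have hXu : SuppOn (Ω1 ∪ Ω2) X' := suppOn_mono Finset.subset_union_left hXs
  have hYu : SuppOn (Ω1 ∪ Ω2) Y' := suppOn_mono Finset.subset_union_right hYs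
  have hio : inner (𝕜 := ℂ) (toE X') (toE Y') = 0 := inner_disjoint hd hXs hYs
  have hplus := (hRIP (Ω1 ∪ Ω2) hcard (X' + Y') (suppOn_add hXu hYu)).2
  have hminus := (hRIP (Ω1 ∪ Ω2) hcard (X' - Y') (suppOn_sub hXu hYu)).1
  have hps : frob (X' + Y') ^ 2 = frob X' ^ 2 + frob Y' ^ 2 := by
    rw [frob_add_sq, hio]; simp
  have hms : frob (X' - Y') ^ 2 = frob X' ^ 2 + frob Y' ^ 2 := by
    rw [frob_sub_sq, hio]; simp
  have hPp : frob (Ψ * (X' + Y')) ^ 2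
      = frob (Ψ * X') ^ 2 + 2 * (inner (𝕜 := ℂ) (toE (Ψ * X')) (toE (Ψ * Y'))).re
        + frob (Ψ * Y') ^ 2 := by
    rw [Matrix.mul_add, frob_add_sq]
  have hPm : frob (Ψ * (X' - Y')) ^ 2
      = frob (Ψ * X') ^ 2 - 2 * (inner (𝕜 := ℂ) (toE (Ψ * X')) (toE (Ψ * Y'))).re
        + frob (Ψ * Y') ^ 2 := by
    rw [Matrix.mul_sub, frob_sub_sq]
  have hsm : Ψ * X' = (b : ℂ) • (Ψ * X) := by rw [hX', Matrix.mul_smul]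
  have hsm' : Ψ * Y' = (a : ℂ) • (Ψ * Y) := by rw [hY', Matrix.mul_smul]
  have hin : (inner (𝕜 := ℂ) (toE (Ψ * X')) (toE (Ψ * Y'))).re
      = a * b * (inner (𝕜 := ℂ) (toE (Ψ * X)) (toE (Ψ * Y))).re := by
    rw [hsm, hsm', toE_smul, toE_smul, inner_smul_left, inner_smul_right]
    rw [Complex.conj_ofReal, ← mul_assoc, ← Complex.ofReal_mul, Complex.re_ofReal_mul]
    ring
  set t := (inner (𝕜 := ℂ) (toE (Ψ * X)) (toE (Ψ * Y))).re
  rw [hps] at hplus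
  rw [hms] at hminus
  rw [hPp, hin] at hplus
  rw [hPm, hin] at hminus
  rw [hfX', hfY'] at hplus hminus
  -- hplus : fX'Ψ² + 2ab t + fY'Ψ² ≤ (1+δ)((ba)²+(ab)²)
  -- hminus : (1-δ)((ba)²+(ab)²) ≤ fX'Ψ² - 2ab t + fY'Ψ²
  have hab : 0 < a * b := mul_pos hap hbp
  nlinarith [hplus, hminus, hab]

lemma gram_lower (Ψ : Matrix (Fin Np) (Fin L × Fin M) ℂ) (P : ℕ) (δP : ℝ)
    (hRIP : SRIP (R := R) Ψ P δP) (Ω : Finset (Fin L)) (hc : Ω.card ≤ P)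
    (V : Matrix ({l // l ∈ Ω} × Fin M) (Fin R) ℂ) :
    (1 - δP) * frob V ≤ frob ((bsub Ψ Ω)ᴴ * bsub Ψ Ω * V) := by
  set A := bsub Ψ Ω with hA
  have h1 : (1 - δP) * frob V ^ 2 ≤ frob (A * V) ^ 2 := by
    have := (hRIP Ω hc (expand Ω V) (suppOn_expand Ω V)).1
    rwa [frob_expand, mul_expand] at this
  have h2 : frob (A * V) ^ 2 = (inner (𝕜 := ℂ) (toE V) (toE (Aᴴ * (A * V)))).re := by
    rw [frob_sq, adjoint_inner]
  have h3 : (inner (𝕜 := ℂ) (toE V) (toE (Aᴴ * (A * V)))).re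
      ≤ frob V * frob (Aᴴ * (A * V)) := by
    rw [frob_eq_norm, frob_eq_norm]
    exact re_inner_le' _ _
  have key : (1 - δP) * frob V ^ 2 ≤ frob V * frob (Aᴴ * A * V) := by
    rw [Matrix.mul_assoc]
    calc (1 - δP) * frob V ^ 2 ≤ frob (A * V) ^ 2 := h1
      _ = (inner (𝕜 := ℂ) (toE V) (toE (Aᴴ * (A * V)))).re := h2
      _ ≤ frob V * frob (Aᴴ * (A * V)) := h3
  rcases eq_or_lt_of_le (frob_nonneg V) with hz | hp
  · rw [← hz, mul_zero]
    exact frob_nonneg _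
  · nlinarith [key, hp]

lemma mul_bsub_upper (Ψ : Matrix (Fin Np) (Fin L × Fin M) ℂ) (P : ℕ) (δP : ℝ)
    (hRIP : SRIP (R := R) Ψ P δP) (Ω : Finset (Fin L)) (hc : Ω.card ≤ P)
    (V : Matrix ({l // l ∈ Ω} × Fin M) (Fin R) ℂ) :
    frob (bsub Ψ Ω * V) ≤ Real.sqrt (1 + δP) * frob V := by
  refine sqrt_mul_bound (frob_nonneg _) (frob_nonneg _) ?_
  have := (hRIP Ω hc (expand Ω V) (suppOn_expand Ω V)).2
  rwa [frob_expand, mul_expand] at this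

lemma supp_zero (Ψ : Matrix (Fin Np) (Fin L × Fin M) ℂ) (P : ℕ) (δ : ℝ)
    (hRIP : SRIP (R := R) Ψ P δ) (hδ : δ < 0) (Ω : Finset (Fin L)) (hc : Ω.card ≤ P)
    (X : Matrix (Fin L × Fin M) (Fin R) ℂ) (hX : SuppOn Ω X) : X = 0 := by
  obtain ⟨h1, h2⟩ := hRIP Ω hc X hX
  have hsq : frob X ^ 2 = 0 := by nlinarith [frob_nonneg X, sq_nonneg (frob X)]
  exact frob_eq_zero ((pow_eq_zero_iff two_ne_zero).mp hsq)


set_option maxHeartbeats 1000000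

/-- error bound for the least-squares estimator on an estimated block support. -/
theorem ls_estimator_error_bound
    (Ψ : Matrix (Fin Np) (Fin L × Fin M) ℂ) (P : ℕ) (δP δ2P : ℝ)
    (hRIP_P : SRIP (R := R) Ψ P δP) (hRIP_2P : SRIP (R := R) Ψ (2 * P) δ2P)
    (hmono : δP ≤ δ2P) (hδ2P : δ2P < 1)
    (ΩT Ωhat : Finset (Fin L)) (hcT : ΩT.card ≤ P) (hchat : Ωhat.card ≤ P)
    (D : Matrix (Fin L × Fin M) (Fin R) ℂ) (hD : SuppOn ΩT D)
    (W : Matrix (Fin Np) (Fin R) ℂ) (Y : Matrix (Fin Np) (Fin R) ℂ)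
    (hY : Y = Ψ * D + W)
    (Dhat : Matrix (Fin L × Fin M) (Fin R) ℂ)
    (hDhat : Dhat = expand Ωhat (bpinv Ψ Ωhat * Y)) :
    frob (D - Dhat) ≤
      ((1 - δP + δ2P) / (1 - δP)) * frob (rsub D (ΩT \ Ωhat)) +
        (Real.sqrt (1 + δP) / (1 - δP)) * frob W := by
  have h1P : (0:ℝ) < 1 - δP := by linarith
  have hc1 : 0 ≤ (1 - δP + δ2P) / (1 - δP) := div_nonneg (by linarith) h1P.le
  have hc2 : 0 ≤ Real.sqrt (1 + δP) / (1 - δP) := div_nonneg (Real.sqrt_nonneg _) h1P.le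
  have hfE0 : 0 ≤ frob (rsub D (ΩT \ Ωhat)) := frob_nonneg _
  have hWf : 0 ≤ frob W := frob_nonneg _
  have hrhs : 0 ≤ ((1 - δP + δ2P) / (1 - δP)) * frob (rsub D (ΩT \ Ωhat)) +
      (Real.sqrt (1 + δP) / (1 - δP)) * frob W :=
    add_nonneg (mul_nonneg hc1 hfE0) (mul_nonneg hc2 hWf)
  rcases Nat.eq_zero_or_pos R with hR0 | hR
  · subst hR0
    have hz : frob (D - Dhat) = 0 := by simp [frob]
    rw [hz]; exact hrhs
  by_cases hneg : δ2P < 0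
  · have hD0 : D = 0 := supp_zero Ψ (2 * P) δ2P hRIP_2P hneg ΩT (by omega) D hD
    have hDh : Dhat = 0 := by
      rw [hDhat]
      exact supp_zero Ψ (2 * P) δ2P hRIP_2P hneg Ωhat (by omega) _ (suppOn_expand _ _)
    have hz0 : frob (D - Dhat) = 0 := by rw [hD0, hDh, sub_self, frob_zero]
    rw [hz0]; exact hrhs
  push_neg at hneg
  set A := bsub Ψ Ωhat with hAdef
  set G := Aᴴ * A with hGdef
  -- invertibility of the Gram matrix
  have hA0 : ∀ v : {l // l ∈ Ωhat} × Fin M → ℂ, A.mulVec v = 0 → v = 0 := by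
    intro v hv
    set U : Matrix ({l // l ∈ Ωhat} × Fin M) (Fin R) ℂ := Matrix.of (fun q _ => v q) with hU
    have hAU : A * U = 0 := by
      ext i r
      rw [Matrix.mul_apply]
      have := congrFun hv i
      simpa [Matrix.mulVec, dotProduct, hU] using this
    have h := (hRIP_P Ωhat hchat (expand Ωhat U) (suppOn_expand Ωhat U)).1
    rw [frob_expand, mul_expand, ← hAdef, hAU, frob_zero] at h
    have hf : frob U ^ 2 = 0 := by nlinarith [sq_nonneg (frob U)]
    have hU0 : U = 0 := frob_eq_zero ((pow_eq_zero_iff two_ne_zero).mp hf)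
    funext q
    have := congrFun (congrFun hU0 q) ⟨0, hR⟩
    simpa [hU] using this
  have hGdet : IsUnit G.det := by
    rw [isUnit_iff_ne_zero]
    intro h0
    obtain ⟨v, hv0, hv⟩ := Matrix.exists_mulVec_eq_zero_iff.mpr h0
    apply hv0
    apply hA0
    have hw : star v ⬝ᵥ G.mulVec v = 0 := by rw [hv, dotProduct_zero]
    rw [hGdef, ← Matrix.mulVec_mulVec, Matrix.dotProduct_mulVec, ← Matrix.star_mulVec] at hw
    set w := A.mulVec v with hwdef
    have hsum : ∑ i, Complex.normSq (w i) = 0 := by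
      have h2 : (↑(∑ i, Complex.normSq (w i)) : ℂ) = 0 := by
        rw [← hw]
        push_cast
        simp [dotProduct, Complex.normSq_eq_conj_mul_self, Pi.star_apply]
      exact_mod_cast h2
    funext i
    have hi := (Finset.sum_eq_zero_iff_of_nonneg
      (fun i _ => Complex.normSq_nonneg (w i))).mp hsum i (Finset.mem_univ i)
    exact Complex.normSq_eq_zero.mp hi
  -- splitting D
  set DΩ := rsub D Ωhat with hDΩ
  set E : Matrix (Fin L × Fin M) (Fin R) ℂ :=
    Matrix.of (fun p r => if p.1 ∈ Ωhat then 0 else D p r) with hEdef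
  have hsplit : D = expand Ωhat DΩ + E := by
    ext ⟨l, m⟩ r
    by_cases h : l ∈ Ωhat
    · simp [expand, hEdef, hDΩ, rsub, h, Matrix.add_apply]
    · simp [expand, hEdef, h, Matrix.add_apply]
  have hEsupp : SuppOn (ΩT \ Ωhat) E := by
    intro p r hp
    simp only [hEdef, Matrix.of_apply]
    by_cases h : p.1 ∈ Ωhat
    · rw [if_pos h]
    · rw [if_neg h]
      exact hD p r (fun hT => hp (Finset.mem_sdiff.mpr ⟨hT, h⟩))
  have hEfrob : frob E = frob (rsub D (ΩT \ Ωhat)) := by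
    have hEe : E = expand (ΩT \ Ωhat) (rsub D (ΩT \ Ωhat)) := by
      ext ⟨l, m⟩ r
      by_cases h : l ∈ ΩT \ Ωhat
      · obtain ⟨hT, hh⟩ := Finset.mem_sdiff.mp h
        simp [expand, hEdef, h, hh, rsub]
      · rw [hEsupp (l, m) r h, suppOn_expand _ _ (l, m) r h]
    rw [hEe, frob_expand]
  -- the least squares solution
  set V1 := G⁻¹ * (Aᴴ * (Ψ * E)) with hV1
  set V2 := G⁻¹ * (Aᴴ * W) with hV2
  have hGV1 : G * V1 = Aᴴ * (Ψ * E) := by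
    rw [hV1, ← Matrix.mul_assoc, Matrix.mul_nonsing_inv _ hGdet, Matrix.one_mul]
  have hGV2 : G * V2 = Aᴴ * W := by
    rw [hV2, ← Matrix.mul_assoc, Matrix.mul_nonsing_inv _ hGdet, Matrix.one_mul]
  have hbpinv : bpinv Ψ Ωhat = G⁻¹ * Aᴴ := by
    rw [hGdef, hAdef]; rfl
  have hbp : bpinv Ψ Ωhat * Y = DΩ + (V1 + V2) := by
    have e1 : (G⁻¹ * Aᴴ) * (A * DΩ) = DΩ := by
      rw [Matrix.mul_assoc G⁻¹, ← Matrix.mul_assoc Aᴴ, ← hGdef, ← Matrix.mul_assoc,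
        Matrix.nonsing_inv_mul _ hGdet, Matrix.one_mul]
    have e2 : (G⁻¹ * Aᴴ) * (Ψ * E) = V1 := by rw [Matrix.mul_assoc]
    have e3 : (G⁻¹ * Aᴴ) * W = V2 := by rw [Matrix.mul_assoc]
    rw [hY]
    conv_lhs => rw [hsplit]
    rw [Matrix.mul_add Ψ, mul_expand, ← hAdef, hbpinv, Matrix.mul_add, Matrix.mul_add,
      e1, e2, e3, add_assoc]
  have hdiff : D - Dhat = expand Ωhat (DΩ - bpinv Ψ Ωhat * Y) + E := by
    have hexp : expand Ωhat DΩ - expand Ωhat (bpinv Ψ Ωhat * Y)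
        = expand Ωhat (DΩ - bpinv Ψ Ωhat * Y) := by
      ext ⟨l, m⟩ r
      by_cases h : l ∈ Ωhat <;> simp [expand, h, Matrix.sub_apply]
    rw [hDhat]
    conv_lhs => rw [hsplit]
    rw [← hexp]
    abel
  have hZ : DΩ - bpinv Ψ Ωhat * Y = -(V1 + V2) := by rw [hbp]; abel
  -- bound on V1
  have hV1b : (1 - δP) * frob V1 ≤ δ2P * frob (rsub D (ΩT \ Ωhat)) := by
    have hg := gram_lower Ψ P δP hRIP_P Ωhat hchat V1
    rw [← hAdef, ← hGdef, hGV1] at hg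
    have hH : frob (Aᴴ * (Ψ * E)) ≤ δ2P * frob E := by
      have h1 : frob (Aᴴ * (Ψ * E)) ^ 2
          = (inner (𝕜 := ℂ) (toE (Ψ * expand Ωhat (Aᴴ * (Ψ * E)))) (toE (Ψ * E))).re := by
        rw [frob_sq, mul_expand, ← hAdef]
        exact congrArg Complex.re (adjoint_inner A (Aᴴ * (Ψ * E)) (Ψ * E)).symm
      have hcard2 : (ΩT \ Ωhat).card ≤ P :=
        le_trans (Finset.card_le_card Finset.sdiff_subset) hcT
      have hdisj : Disjoint Ωhat (ΩT \ Ωhat) := Finset.disjoint_sdiff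
      have h2 := cross_bound Ψ P δ2P hRIP_2P hchat hcard2 hdisj
        (suppOn_expand Ωhat (Aᴴ * (Ψ * E))) hEsupp
      rw [frob_expand] at h2
      rw [← h1] at h2
      rcases eq_or_lt_of_le (frob_nonneg (Aᴴ * (Ψ * E))) with hz | hp
      · rw [← hz]
        exact mul_nonneg hneg (frob_nonneg E)
      · nlinarith [h2, hp]
    calc (1 - δP) * frob V1 ≤ frob (Aᴴ * (Ψ * E)) := hg
      _ ≤ δ2P * frob E := hH
      _ = δ2P * frob (rsub D (ΩT \ Ωhat)) := by rw [hEfrob]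
  -- bound on V2
  have hV2b : (1 - δP) * frob V2 ≤ Real.sqrt (1 + δP) * frob W := by
    have hg := gram_lower Ψ P δP hRIP_P Ωhat hchat V2
    rw [← hAdef, ← hGdef, hGV2] at hg
    have hAW : frob (Aᴴ * W) ≤ Real.sqrt (1 + δP) * frob W := by
      have h1 : frob (Aᴴ * W) ^ 2 = (inner (𝕜 := ℂ) (toE (A * (Aᴴ * W))) (toE W)).re := by
        rw [frob_sq]
        exact congrArg Complex.re (adjoint_inner A (Aᴴ * W) W).symm
      have h2 : (inner (𝕜 := ℂ) (toE (A * (Aᴴ * W))) (toE W)).re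
          ≤ frob (A * (Aᴴ * W)) * frob W := by
        rw [frob_eq_norm, frob_eq_norm]
        exact re_inner_le' _ _
      have h3 : frob (A * (Aᴴ * W)) ≤ Real.sqrt (1 + δP) * frob (Aᴴ * W) := by
        have := mul_bsub_upper Ψ P δP hRIP_P Ωhat hchat (Aᴴ * W)
        rwa [← hAdef] at this
      rcases eq_or_lt_of_le (frob_nonneg (Aᴴ * W)) with hz | hp
      · rw [← hz]
        exact mul_nonneg (Real.sqrt_nonneg _) (frob_nonneg W)
      · nlinarith [h1, h2, h3, hp, frob_nonneg W, frob_nonneg (A * (Aᴴ * W))]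
    exact le_trans hg hAW
  -- final
  have tineq : frob (D - Dhat) ≤ frob (DΩ - bpinv Ψ Ωhat * Y) + frob E := by
    rw [hdiff]
    refine le_trans (frob_add_le _ _) ?_
    rw [frob_expand]
  have hZf : frob (DΩ - bpinv Ψ Ωhat * Y) ≤ frob V1 + frob V2 := by
    rw [hZ, frob_neg]; exact frob_add_le _ _
  have hsum : frob (D - Dhat) ≤ frob V1 + frob V2 + frob (rsub D (ΩT \ Ωhat)) := by
    rw [← hEfrob]; linarith
  rw [div_mul_eq_mul_div, div_mul_eq_mul_div, ← add_div, le_div_iff₀ h1P]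
  have hmul := mul_le_mul_of_nonneg_right hsum h1P.le
  nlinarith [hmul, hV1b, hV2b, hfE0]
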